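/- Let Γ be a connected multigraph with vertex set V and let S ⊊ V be nonempty such that the induced subgraph Γ[V∖S] is connected. Then for every connected component of Γ[S], with vertex set C, the induced subgraph Γ[V∖C] is connected; in particular C is an elementary subset of V. -/

import Mathlib

namespace ThetaPaper

/-- The adjacency relation within a vertex set `S`: `a` and `b` lie in `S`
and are joined by an edge of the multigraph with edge-endpoint map `ends`. -/
def AdjOn {V E : Type} (ends : E → Sym2 V) (S : Set V) (a b : V) : Prop :=
  a ∈ S ∧ b ∈ S ∧ ∃ e, ends e = s(a, b)

/-- The induced subgraph on `S` is (nonempty and) connected. -/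
def ConnectedOn {V E : Type} (ends : E → Sym2 V) (S : Set V) : Prop :=
  S.Nonempty ∧ ∀ a ∈ S, ∀ b ∈ S, Relation.ReflTransGen (AdjOn ends S) a b

/-- The multigraph is connected. -/
def GraphConnected {V E : Type} (ends : E → Sym2 V) : Prop :=
  ConnectedOn ends Set.univ

/-- A nonempty proper subset `S` of the vertices is elementary if both the induced
subgraph on `S` and the induced subgraph on its complement are connected. -/
def Elementary {V E : Type} (ends : E → Sym2 V) (S : Set V) : Prop :=
  S.Nonempty ∧ Sᶜ.Nonempty ∧ ConnectedOn ends S ∧ ConnectedOn ends Sᶜ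

/-- `cut S` is the number of edges with one endpoint in `S` and the other outside. -/
noncomputable def cut {V E : Type} (ends : E → Sym2 V) (S : Set V) : ℕ :=
  Nat.card {e : E // ∃ a b, ends e = s(a, b) ∧ a ∈ S ∧ b ∉ S}

/-- `ℓ(S,d)(φ) = d − Σ_{v∈S} φ(v) + cut(S)/2`. -/
noncomputable def ell {V E : Type} (ends : E → Sym2 V) (S : Set V) (d : ℤ) (φ : V → ℝ) : ℝ :=
  (d : ℝ) - (∑ᶠ v ∈ S, φ v) + (cut ends S : ℝ) / 2

/-- `φ` is nondegenerate: it lies on no stability hyperplane. -/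
def Nondegenerate {V E : Type} (ends : E → Sym2 V) (φ : V → ℝ) : Prop :=
  ∀ S : Set V, Elementary ends S → ∀ d : ℤ, ell ends S d φ ≠ 0

/-- The multigraph has loop-free circuit rank 0: after deleting all loops it is a tree
(connected, with number of edges = number of vertices − 1). -/
def RankZero {V E : Type} [Fintype V] (ends : E → Sym2 V) : Prop :=
  GraphConnected (fun e : {e : E // ¬ (ends e).IsDiag} => ends e.1) ∧
  Nat.card {e : E // ¬ (ends e).IsDiag} + 1 = Fintype.card V

/-- A sheaf model of degree `g−1`: a multidegree `dd` on the vertices together with a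
set `N` of nodes (where the corresponding sheaf fails to be locally free), with
`Σ dd + #N = g − 1`. -/
def IsSheafModel {V E : Type} [Fintype V] (dd : V → ℤ) (N : Set E) (g : ℤ) : Prop :=
  (∑ v, dd v) + (Nat.card N : ℤ) = g - 1

/-- The degree of the sheaf model `(dd, N)` on the subcurve with vertex set `S`:
`Σ_{v∈S} dd v` plus the number of edges of `N` with both endpoints in `S`. -/
noncomputable def degS {V E : Type} (ends : E → Sym2 V) (dd : V → ℤ) (N : Set E)
    (S : Set V) : ℤ :=
  (∑ᶠ v ∈ S, dd v) + (Nat.card {e : E // e ∈ N ∧ ∀ v ∈ ends e, v ∈ S} : ℤ)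

/-- `φ`-semistability of a sheaf model. -/
def Semistable {V E : Type} (ends : E → Sym2 V) (dd : V → ℤ) (N : Set E)
    (φ : V → ℝ) : Prop :=
  ∀ S : Set V, S.Nonempty → S ≠ Set.univ →
    (∑ᶠ v ∈ S, φ v) - (cut ends S : ℝ) / 2 ≤ (degS ends dd N S : ℝ)

/-- `φ`-stability of a sheaf model. -/
def Stable {V E : Type} (ends : E → Sym2 V) (dd : V → ℤ) (N : Set E)
    (φ : V → ℝ) : Prop :=
  ∀ S : Set V, S.Nonempty → S ≠ Set.univ →
    (∑ᶠ v ∈ S, φ v) - (cut ends S : ℝ) / 2 < (degS ends dd N S : ℝ)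

/-- The set of nondegenerate elements of the affine space `V(Γ)` (with the real
number `gr` playing the role of `g`). -/
def OmegaSet {V E : Type} [Fintype V] (ends : E → Sym2 V) (gr : ℝ) : Set (V → ℝ) :=
  {φ | (∑ v, φ v) = gr - 1 ∧ Nondegenerate ends φ}

/-- `P` is a stability polytope of `V(Γ)`: a connected component of the complement in
`V(Γ)` of the union of all stability hyperplanes. -/
def IsStabPolytope {V E : Type} [Fintype V] (ends : E → Sym2 V) (gr : ℝ)
    (P : Set (V → ℝ)) : Prop :=
  ∃ φ0 ∈ OmegaSet ends gr, P = connectedComponentIn (OmegaSet ends gr) φ0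

/-- The connected component of `u` in the induced subgraph `Γ[S]` (for `u ∈ S`):
the set of vertices reachable from `u` by edges lying inside `S`. -/
def compIn {V E : Type} (ends : E → Sym2 V) (S : Set V) (u : V) : Set V :=
  {w | Relation.ReflTransGen (AdjOn ends S) u w}


lemma adjOn_symm {V E : Type} (ends : E → Sym2 V) (T : Set V) :
    Symmetric (AdjOn ends T) := by
  rintro a b ⟨ha, hb, e, he⟩
  exact ⟨hb, ha, e, by rw [he, Sym2.eq_swap]⟩

lemma adjOn_mono {V E : Type} (ends : E → Sym2 V) {T T' : Set V} (h : T ⊆ T') :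
    ∀ a b, AdjOn ends T a b → AdjOn ends T' a b := by
  rintro a b ⟨ha, hb, he⟩; exact ⟨h ha, h hb, he⟩

/-- Let `Γ` be a connected multigraph and `S ⊊ V` nonempty with
`Γ[V∖S]` connected.  Then for every connected component of `Γ[S]` — i.e. the
component `compIn ends S u` of any `u ∈ S` — the induced subgraph on its complement
is connected; in particular the component is an elementary subset. -/
theorem statement2 (V E : Type) (ends : E → Sym2 V)
    (hconn : GraphConnected ends)
    (S : Set V) (hSne : S.Nonempty) (hSproper : S ≠ Set.univ)
    (hScompl : ConnectedOn ends Sᶜ)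
    (u : V) (hu : u ∈ S) :
    ConnectedOn ends (compIn ends S u)ᶜ ∧ Elementary ends (compIn ends S u) := by
  set C := compIn ends S u with hC
  have hnotuniv := hSproper
  have ht' : Sᶜ.Nonempty := Set.nonempty_compl.mpr hSproper
  obtain ⟨t, ht⟩ := ht'
  have hCsub : C ⊆ S := by
    intro x hx
    induction hx with
    | refl => exact hu
    | tail _ h _ => exact h.2.1
  have hScCc : Sᶜ ⊆ Cᶜ := fun x hx hxC => hx (hCsub hxC)
  -- paths from u inside S stay inside C
  have hpathC : ∀ a, a ∈ C → Relation.ReflTransGen (AdjOn ends C) u a := by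
    intro a ha
    induction ha with
    | refl => exact .refl
    | tail hb hba ih => exact ih.tail ⟨hb, hb.tail hba, hba.2.2⟩
  have huC : u ∈ C := Relation.ReflTransGen.refl
  have hsymmC : ∀ {a b : V}, Relation.ReflTransGen (AdjOn ends C) a b →
      Relation.ReflTransGen (AdjOn ends C) b a := fun {a b} h =>
    (@Relation.ReflTransGen.stdSymm _ _ ⟨fun a b h => adjOn_symm ends C h⟩).symm a b h
  have hconnC : ConnectedOn ends C := by
    refine ⟨⟨u, huC⟩, fun a ha b hb => ?_⟩
    exact (hsymmC (hpathC a ha)).trans (hpathC b hb)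
  -- every vertex of Cᶜ reaches Sᶜ within Cᶜ
  have hreach : ∀ x, Relation.ReflTransGen (AdjOn ends Set.univ) x t →
      x ∈ Cᶜ → ∃ z ∈ Sᶜ, Relation.ReflTransGen (AdjOn ends Cᶜ) x z := by
    intro x hpath
    induction hpath using Relation.ReflTransGen.head_induction_on with
    | refl => exact fun _ => ⟨t, ht, .refl⟩
    | @head x y hxy hyt ih =>
      intro hx
      by_cases hxS : x ∈ S
      · by_cases hyS : y ∈ S
        · have hyC : y ∈ Cᶜ := by
            intro hyC
            exact hx (hyC.tail ⟨hyS, hxS, hxy.2.2.choose,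
              by rw [hxy.2.2.choose_spec, Sym2.eq_swap]⟩)
          obtain ⟨z, hz, hp⟩ := ih hyC
          exact ⟨z, hz, hp.head ⟨hx, hyC, hxy.2.2⟩⟩
        · exact ⟨y, hyS, .single ⟨hx, hScCc hyS, hxy.2.2⟩⟩
      · exact ⟨x, hxS, .refl⟩
  have htC : t ∈ Cᶜ := hScCc ht
  have hconnCc : ConnectedOn ends Cᶜ := by
    refine ⟨⟨t, htC⟩, fun a ha b hb => ?_⟩
    obtain ⟨za, hza, pa⟩ := hreach a (hconn.2 a trivial t trivial) ha
    obtain ⟨zb, hzb, pb⟩ := hreach b (hconn.2 b trivial t trivial) hb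
    have mid : Relation.ReflTransGen (AdjOn ends Cᶜ) za zb :=
      Relation.ReflTransGen.mono (adjOn_mono ends hScCc) _ _ (hScompl.2 za hza zb hzb)
    exact (pa.trans mid).trans
      ((@Relation.ReflTransGen.stdSymm _ _ ⟨fun a b h => adjOn_symm ends Cᶜ h⟩).symm _ _ pb)
  exact ⟨hconnCc, ⟨u, huC⟩, ⟨t, htC⟩, hconnC, hconnCc⟩


end ThetaPaper
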